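/- Let k = 2^δ and suppose at most f faults occur, each fault removing one node from a single group during the recursive halving process n_p = (n_{p-1} - 1 - f_p)/2 where ∑ f_p ≤ f. Then every final group among the k groups has size at least n/k - f - 1. -/

import Mathlib

lemma stmt_4_aux (n : ℚ) (a : ℕ → ℚ) (fp : ℕ → ℚ)
    (h0 : a 0 = n) (hfp : ∀ p, 0 ≤ fp p)
    (hrec : ∀ p, a (p + 1) = (a p - 1 - fp p) / 2) :
    ∀ δ : ℕ, a δ ≥ n / 2 ^ δ - (∑ p ∈ Finset.range δ, fp p) - (1 - 1 / 2 ^ δ) := by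
  intro δ
  induction δ with
  | zero => simp [h0]
  | succ d ih =>
      have hS : 0 ≤ ∑ p ∈ Finset.range d, fp p + fp d :=
        add_nonneg (Finset.sum_nonneg fun i _ => hfp i) (hfp d)
      rw [hrec d, Finset.sum_range_succ]
      have e1 : n / 2 ^ (d+1) = (n / 2 ^ d) / 2 := by
        rw [pow_succ]; ring
      have e2 : (1:ℚ) / 2 ^ (d+1) = (1 / 2 ^ d) / 2 := by
        rw [pow_succ]; ring
      rw [e1, e2]
      linarith [hfp d]

/-- Faulty recursive halving: `a 0 = n`, `a (p+1) = (a p - 1 - fp p)/2` over ℚ with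
`fp p ≥ 0` and total faults `∑_{p<δ} fp p ≤ f`. Then each final group among the
`k = 2^δ` groups has size at least `n/k - f - 1`. -/
theorem stmt_4 (n f : ℚ) (δ : ℕ) (a : ℕ → ℚ) (fp : ℕ → ℚ)
    (h0 : a 0 = n) (hfp : ∀ p, 0 ≤ fp p)
    (hrec : ∀ p, a (p + 1) = (a p - 1 - fp p) / 2)
    (hsum : ∑ p ∈ Finset.range δ, fp p ≤ f) :
    a δ ≥ n / 2 ^ δ - f - 1 := by
  have h := stmt_4_aux n a fp h0 hfp hrec δ
  have hpos : (0:ℚ) < 1 / 2 ^ δ := by positivity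
  linarith
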